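/- arXiv:1011.6302 — 3 statements merged into one kernel-verified Lean document; each statement's English description precedes it below -/
import Mathlib

section
/- Let ψ : {0,1}ⁿ → ℝ be a pseudo-Boolean function, let σ be a permutation of [n], and let x ∈ ℝⁿ_σ. Then L_ψ(x) = ψ(0) + Σ_{i=1}^{n} x_{σ(i)}·(v_ψ(A_σ^↑(i)) − v_ψ(A_σ^↑(i+1))), and equivalently L_ψ(x) = ψ(0) + Σ_{i=1}^{n} x_{σ(i)}·(L_ψ(1_{A_σ^↑(i)}) − L_ψ(1_{A_σ^↑(i+1)})). In particular the restriction of L_ψ to ℝⁿ_σ is an affine function agreeing with ψ at the points 1_{A_σ^↑(k)}, k ∈ [n+1]. -/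
open Finset

/-- The indicator tuple `1_A` of a subset `A ⊆ [n]`. -/
def ind {n : ℕ} (A : Finset (Fin n)) : Fin n → ℝ := fun i => if i ∈ A then 1 else 0

/-- The Möbius transform of a pseudo-Boolean function (viewed as a set function). -/
def mobius {n : ℕ} (ψ : Finset (Fin n) → ℝ) (A : Finset (Fin n)) : ℝ :=
  ∑ B ∈ A.powerset, (-1 : ℝ) ^ (A.card - B.card) * ψ B

/-- `min_{i ∈ A} x i` (with value `0` for `A = ∅`). -/
def lovMinOn {n : ℕ} (A : Finset (Fin n)) (x : Fin n → ℝ) : ℝ :=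
  if h : A.Nonempty then A.inf' h x else 0

/-- The Lovász extension of a pseudo-Boolean function `ψ` (viewed as a set function):
`L_ψ(x) = a_ψ(∅) + Σ_{∅ ≠ A ⊆ [n]} a_ψ(A) · min_{i ∈ A} x_i`. -/
def Lov {n : ℕ} (ψ : Finset (Fin n) → ℝ) (x : Fin n → ℝ) : ℝ :=
  mobius ψ ∅ + ∑ A : Finset (Fin n), mobius ψ A * lovMinOn A x

/-- `x ∈ ℝⁿ_σ`, i.e. `x_{σ(1)} ≤ ⋯ ≤ x_{σ(n)}`. -/
def inRσ {n : ℕ} (σ : Equiv.Perm (Fin n)) (x : Fin n → ℝ) : Prop :=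
  ∀ i j : Fin n, i ≤ j → x (σ i) ≤ x (σ j)

/-- `A_σ^↑(k) = {σ(j) : j ≥ k}` (0-indexed; `Aup σ n = ∅`). -/
def Aup {n : ℕ} (σ : Equiv.Perm (Fin n)) (k : ℕ) : Finset (Fin n) :=
  (Finset.univ.filter fun j : Fin n => k ≤ (j : ℕ)).image σ

/-- `A_σ^↓(k) = {σ(j) : j < k}` (0-indexed; `Adown σ 0 = ∅`). -/
def Adown {n : ℕ} (σ : Equiv.Perm (Fin n)) (k : ℕ) : Finset (Fin n) :=
  (Finset.univ.filter fun j : Fin n => (j : ℕ) < k).image σ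

lemma neg_one_pow_sum {α : Type*} [DecidableEq α] (x : Finset α) :
    (∑ m ∈ x.powerset, (-1 : ℝ) ^ m.card) = if x = ∅ then 1 else 0 := by
  have := Finset.sum_powerset_neg_one_pow_card (x := x)
  have h2 : ((∑ m ∈ x.powerset, (-1 : ℤ) ^ m.card : ℤ) : ℝ)
      = ∑ m ∈ x.powerset, (-1 : ℝ) ^ m.card := by push_cast; ring_nf
  rw [← h2, this]
  split <;> simp

lemma icc_sum {n : ℕ} (C A : Finset (Fin n)) (hCA : C ⊆ A) :
    (∑ B ∈ Finset.Icc C A, (-1 : ℝ) ^ (B.card - C.card)) = if C = A then 1 else 0 := by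
  have key : (∑ B ∈ Finset.Icc C A, (-1 : ℝ) ^ (B.card - C.card))
      = ∑ D ∈ (A \ C).powerset, (-1 : ℝ) ^ D.card := by
    refine Finset.sum_bij' (fun B _ => B \ C) (fun D _ => D ∪ C) ?_ ?_ ?_ ?_ ?_
    · intro B hB
      rw [Finset.mem_Icc] at hB
      rw [Finset.mem_powerset]
      exact sdiff_subset_sdiff hB.2 le_rfl
    · intro D hD
      rw [Finset.mem_powerset] at hD
      rw [Finset.mem_Icc]
      constructor
      · exact Finset.subset_union_right
      · exact Finset.union_subset (hD.trans (Finset.sdiff_subset)) hCA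
    · intro B hB
      rw [Finset.mem_Icc] at hB
      exact Finset.sdiff_union_of_subset hB.1
    · intro D hD
      rw [Finset.mem_powerset] at hD
      exact Finset.union_sdiff_cancel_right (Finset.disjoint_left.2 fun a ha => (Finset.mem_sdiff.1 (hD ha)).2)
    · intro B hB
      rw [Finset.mem_Icc] at hB
      congr 1
      rw [Finset.card_sdiff_of_subset hB.1]
  rw [key, neg_one_pow_sum]
  have : A \ C = ∅ ↔ C = A := by
    rw [Finset.sdiff_eq_empty_iff_subset]
    exact ⟨fun h => Finset.Subset.antisymm hCA h, fun h => h ▸ le_rfl⟩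
  simp [this]

lemma mobius_inv {n : ℕ} (ψ : Finset (Fin n) → ℝ) (A : Finset (Fin n)) :
    ∑ B ∈ A.powerset, mobius ψ B = ψ A := by
  unfold mobius
  rw [Finset.sum_comm' (t' := A.powerset) (s' := fun C => Finset.Icc C A)
    (fun B C => by
      simp only [Finset.mem_powerset, Finset.mem_Icc, Finset.le_iff_subset]
      constructor
      · rintro ⟨h1, h2⟩; exact ⟨⟨h2, h1⟩, h2.trans h1⟩
      · rintro ⟨⟨h1, h2⟩, h3⟩; exact ⟨h2, h1⟩)]
  have : ∀ C ∈ A.powerset, (∑ B ∈ Finset.Icc C A, (-1:ℝ) ^ (B.card - C.card) * ψ C)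
      = (if C = A then 1 else 0) * ψ C := by
    intro C hC
    rw [← Finset.sum_mul, icc_sum C A (Finset.mem_powerset.1 hC)]
  rw [Finset.sum_congr rfl this]
  simp [Finset.mem_powerset]

lemma minOn_ind {n : ℕ} (A C : Finset (Fin n)) :
    lovMinOn A (ind C) = if A.Nonempty ∧ A ⊆ C then 1 else 0 := by
  unfold lovMinOn
  by_cases h : A.Nonempty
  · rw [dif_pos h]
    by_cases hsub : A ⊆ C
    · rw [if_pos ⟨h, hsub⟩]
      apply le_antisymm
      · obtain ⟨a, ha⟩ := h
        calc A.inf' _ (ind C) ≤ ind C a := Finset.inf'_le _ ha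
          _ ≤ 1 := by simp [ind, hsub ha]
      · apply Finset.le_inf'
        intro b hb
        simp [ind, hsub hb]
    · rw [if_neg (by tauto)]
      obtain ⟨a, ha, hac⟩ := Finset.not_subset.1 hsub
      apply le_antisymm
      · calc A.inf' _ (ind C) ≤ ind C a := Finset.inf'_le _ ha
          _ ≤ 0 := by simp [ind, hac]
      · apply Finset.le_inf'
        intro b _
        simp only [ind]; split <;> norm_num
  · rw [dif_neg h, if_neg (by tauto)]

lemma Lov_ind {n : ℕ} (ψ : Finset (Fin n) → ℝ) (C : Finset (Fin n)) :
    Lov ψ (ind C) = ψ C := by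
  unfold Lov
  have h1 : ∀ A : Finset (Fin n), mobius ψ A * lovMinOn A (ind C)
      = if A ∈ C.powerset.filter (·.Nonempty) then mobius ψ A else 0 := by
    intro A
    rw [minOn_ind]
    simp only [Finset.mem_filter, Finset.mem_powerset]
    by_cases h : A.Nonempty ∧ A ⊆ C
    · rw [if_pos h, if_pos ⟨h.2, h.1⟩, mul_one]
    · rw [if_neg h, if_neg (by tauto), mul_zero]
  rw [Finset.sum_congr rfl (fun A _ => h1 A), Finset.sum_ite_mem,
    Finset.univ_inter]
  have h2 : C.powerset.filter (·.Nonempty) = C.powerset \ {∅} := by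
    ext A
    simp [Finset.mem_filter, Finset.mem_sdiff, Finset.nonempty_iff_ne_empty]
  rw [h2, Finset.sum_sdiff_eq_sub (by simp), mobius_inv]
  have : mobius ψ ∅ = ψ ∅ := by simp [mobius]
  simp [this]

lemma mem_Aup {n : ℕ} (σ : Equiv.Perm (Fin n)) (k : ℕ) (a : Fin n) :
    a ∈ Aup σ k ↔ k ≤ ((σ.symm a : Fin n) : ℕ) := by
  simp only [Aup, Finset.mem_image, Finset.mem_filter, Finset.mem_univ, true_and]
  constructor
  · rintro ⟨j, hj, rfl⟩; simpa using hj
  · intro h; exact ⟨σ.symm a, h, by simp⟩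

lemma Aup_succ {n : ℕ} (σ : Equiv.Perm (Fin n)) (i : Fin n) :
    Aup σ (i : ℕ) = insert (σ i) (Aup σ ((i : ℕ) + 1)) := by
  ext a
  simp only [mem_Aup, Finset.mem_insert]
  constructor
  · intro h
    rcases eq_or_lt_of_le h with h' | h'
    · left
      have : σ.symm a = i := Fin.ext h'.symm
      rw [← this]; simp
    · right; omega
  · rintro (rfl | h)
    · simp
    · omega

lemma sigma_not_mem_Aup_succ {n : ℕ} (σ : Equiv.Perm (Fin n)) (i : Fin n) :
    σ i ∉ Aup σ ((i : ℕ) + 1) := by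
  simp [mem_Aup]

def fiber {n : ℕ} (σ : Equiv.Perm (Fin n)) (i : Fin n) : Finset (Finset (Fin n)) :=
  (Aup σ (i : ℕ)).powerset.filter (fun A => σ i ∈ A)

lemma fiber_sum {n : ℕ} (ψ : Finset (Fin n) → ℝ) (σ : Equiv.Perm (Fin n)) (i : Fin n) :
    ∑ A ∈ fiber σ i, mobius ψ A = ψ (Aup σ (i : ℕ)) - ψ (Aup σ ((i : ℕ) + 1)) := by
  have hsplit := Finset.sum_filter_add_sum_filter_not (Aup σ (i : ℕ)).powerset
    (fun A => σ i ∈ A) (mobius ψ)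
  have h2 : (Aup σ (i : ℕ)).powerset.filter (fun A => σ i ∉ A)
      = (Aup σ ((i : ℕ) + 1)).powerset := by
    ext A
    simp only [Finset.mem_filter, Finset.mem_powerset]
    constructor
    · rintro ⟨hA, hni⟩
      intro a ha
      have := hA ha
      rw [Aup_succ σ i, Finset.mem_insert] at this
      rcases this with rfl | h
      · exact absurd ha hni
      · exact h
    · intro hA
      refine ⟨hA.trans ?_, fun hmem => sigma_not_mem_Aup_succ σ i (hA hmem)⟩
      rw [Aup_succ σ i]; exact Finset.subset_insert _ _
  have := hsplit
  rw [h2, mobius_inv, mobius_inv] at this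
  unfold fiber
  linarith

lemma minOn_fiber {n : ℕ} (σ : Equiv.Perm (Fin n)) (x : Fin n → ℝ) (hx : inRσ σ x)
    (i : Fin n) (A : Finset (Fin n)) (hA : A ∈ fiber σ i) :
    lovMinOn A x = x (σ i) := by
  rw [fiber, Finset.mem_filter, Finset.mem_powerset] at hA
  obtain ⟨hsub, hmem⟩ := hA
  have hne : A.Nonempty := ⟨σ i, hmem⟩
  rw [lovMinOn, dif_pos hne]
  apply le_antisymm
  · exact Finset.inf'_le _ hmem
  · apply Finset.le_inf'
    intro a ha
    have := (mem_Aup σ (i : ℕ) a).1 (hsub ha)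
    have h2 : i ≤ σ.symm a := this
    calc x (σ i) ≤ x (σ (σ.symm a)) := hx i (σ.symm a) h2
      _ = x a := by simp

lemma fibers_disjoint {n : ℕ} (σ : Equiv.Perm (Fin n)) :
    ∀ i ∈ (Finset.univ : Finset (Fin n)), ∀ j ∈ Finset.univ, i ≠ j →
      Disjoint (fiber σ i) (fiber σ j) := by
  intro i _ j _ hij
  rw [Finset.disjoint_left]
  intro A hAi hAj
  rw [fiber, Finset.mem_filter, Finset.mem_powerset] at hAi hAj
  have h1 := (mem_Aup σ (j : ℕ) (σ i)).1 (hAj.1 hAi.2)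
  have h2 := (mem_Aup σ (i : ℕ) (σ j)).1 (hAi.1 hAj.2)
  simp only [Equiv.symm_apply_apply] at h1 h2
  exact hij (Fin.ext (le_antisymm h2 h1))

lemma fibers_union {n : ℕ} (σ : Equiv.Perm (Fin n)) :
    Finset.univ.biUnion (fiber σ) = Finset.univ.filter (fun A : Finset (Fin n) => A.Nonempty) := by
  ext A
  simp only [Finset.mem_biUnion, Finset.mem_univ, true_and, Finset.mem_filter]
  constructor
  · rintro ⟨i, hi⟩
    rw [fiber, Finset.mem_filter] at hi
    exact ⟨σ i, hi.2⟩
  · intro hA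
    have hne : (A.image σ.symm).Nonempty := hA.image _
    set i := (A.image σ.symm).min' hne with hi
    have himem : i ∈ A.image σ.symm := Finset.min'_mem _ _
    obtain ⟨a, ha, hai⟩ := Finset.mem_image.1 himem
    refine ⟨i, ?_⟩
    rw [fiber, Finset.mem_filter, Finset.mem_powerset]
    constructor
    · intro b hb
      rw [mem_Aup]
      have := Finset.min'_le (A.image σ.symm) (σ.symm b) (Finset.mem_image_of_mem _ hb)
      exact this
    · rw [← hai]; simpa using ha

theorem part1 {n : ℕ} (ψ : Finset (Fin n) → ℝ) (σ : Equiv.Perm (Fin n))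
    (x : Fin n → ℝ) (hx : inRσ σ x) :
    Lov ψ x = ψ ∅ + ∑ i : Fin n,
      x (σ i) * (ψ (Aup σ (i : ℕ)) - ψ (Aup σ ((i : ℕ) + 1))) := by
  have hstep : ∀ i : Fin n, x (σ i) * (ψ (Aup σ (i : ℕ)) - ψ (Aup σ ((i : ℕ) + 1)))
      = ∑ A ∈ fiber σ i, mobius ψ A * lovMinOn A x := by
    intro i
    rw [← fiber_sum ψ σ i, Finset.mul_sum]
    refine Finset.sum_congr rfl fun A hA => ?_
    rw [minOn_fiber σ x hx i A hA]
    ring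
  rw [Finset.sum_congr rfl (fun i _ => hstep i), ← Finset.sum_biUnion (fibers_disjoint σ),
    fibers_union]
  have : ∑ A ∈ Finset.univ.filter (fun A : Finset (Fin n) => A.Nonempty),
      mobius ψ A * lovMinOn A x = ∑ A : Finset (Fin n), mobius ψ A * lovMinOn A x := by
    apply Finset.sum_filter_of_ne
    intro A _ h
    rcases A.eq_empty_or_nonempty with rfl | hA
    · exact absurd (by simp [lovMinOn]) h
    · exact hA
  rw [this, Lov]
  have h0 : mobius ψ ∅ = ψ ∅ := by simp [mobius]
  rw [h0]

/-- On `ℝⁿ_σ` the Lovász extension is given by the two affine formulas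
`L_ψ(x) = ψ(∅) + Σᵢ x_{σ(i)}·(v_ψ(A_σ^↑(i)) − v_ψ(A_σ^↑(i+1)))`
`       = ψ(∅) + Σᵢ x_{σ(i)}·(L_ψ(1_{A_σ^↑(i)}) − L_ψ(1_{A_σ^↑(i+1)}))`,
and in particular it agrees with `ψ` at the points `1_{A_σ^↑(k)}`, `k ∈ [n+1]`. -/
theorem stmt0 {n : ℕ} (ψ : Finset (Fin n) → ℝ) (σ : Equiv.Perm (Fin n))
    (x : Fin n → ℝ) (hx : inRσ σ x) :
    (Lov ψ x = ψ ∅ + ∑ i : Fin n,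
      x (σ i) * (ψ (Aup σ (i : ℕ)) - ψ (Aup σ ((i : ℕ) + 1)))) ∧
    (Lov ψ x = ψ ∅ + ∑ i : Fin n,
      x (σ i) * (Lov ψ (ind (Aup σ (i : ℕ))) - Lov ψ (ind (Aup σ ((i : ℕ) + 1))))) ∧
    (∀ k : ℕ, k ≤ n → Lov ψ (ind (Aup σ k)) = ψ (Aup σ k)) := by
  
  have h1 := part1 ψ σ x hx
  refine ⟨h1, ?_, fun k _ => Lov_ind ψ _⟩
  rw [h1]
  congr 1
  exact Finset.sum_congr rfl fun i _ => by rw [Lov_ind, Lov_ind]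
end

section
/- Let I ⊆ ℝ₋ = (−∞,0] be a real interval containing 0 and let f : Iⁿ → ℝ be a quasi-Lovász extension, f = L ∘ φ. Then for every x ∈ I and every A ⊆ [n], f_0(x·1_A) = −φ(x)·L_0(−1_A), where f_0 = f − f(0,…,0) and L_0 = L − L(0,…,0). -/
open Finset

/-- For a quasi-Lovász extension `f = L ∘ φ` on `Iⁿ` with `I ⊆ ℝ₋` an
interval containing `0`, one has `f_0(x·1_A) = −φ(x)·L_0(−1_A)` for all `x ∈ I`, `A ⊆ [n]`. -/
theorem stmt5 {n : ℕ} (I : Set ℝ) (hI : I.OrdConnected) (h0 : (0 : ℝ) ∈ I)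
    (hIneg : I ⊆ Set.Iic (0 : ℝ))
    (f L : (Fin n → ℝ) → ℝ) (φ : ℝ → ℝ)
    (hL : ∃ ψ : Finset (Fin n) → ℝ, L = Lov ψ)
    (hφ : MonotoneOn φ I) (hφ0 : φ 0 = 0)
    (hf : ∀ x : Fin n → ℝ, (∀ i, x i ∈ I) → f x = L (fun i => φ (x i))) :
    ∀ x ∈ I, ∀ A : Finset (Fin n),
      f (fun i => x * ind A i) - f (fun _ => 0) =
        -(φ x) * (L (fun i => -(ind A i)) - L (fun _ => 0)) := by
  obtain ⟨ψ, rfl⟩ := hL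
  intro x hx A
  have hx0 : x ≤ 0 := hIneg hx
  have hmem : ∀ i, x * ind A i ∈ I := by
    intro i
    have hmem' : x * ind A i ∈ Set.Icc x 0 := by
      unfold ind; split_ifs <;> simp [hx0]
    exact hI.out hx h0 hmem'
  have hc : φ x ≤ 0 := hφ0 ▸ hφ hx h0 hx0
  have hf1 : f (fun i => x * ind A i) = Lov ψ (fun i => φ (x * ind A i)) := hf _ hmem
  have hf2 : f (fun _ => 0) = Lov ψ (fun _ => 0) := by
    rw [hf _ (fun _ => h0)]; simp [hφ0]
  have hφind : (fun i => φ (x * ind A i)) = fun i => (-(φ x)) * (-(ind A i)) := by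
    funext i; unfold ind; split_ifs <;> simp [hφ0]
  rw [hf1, hf2, hφind]
  have ht : 0 ≤ -(φ x) := by linarith
  set t := -(φ x) with htdef
  have hz : ∀ B : Finset (Fin n), lovMinOn B (fun _ : Fin n => (0:ℝ)) = 0 := by
    intro B; unfold lovMinOn; split <;> simp
  have hs : ∀ (y : Fin n → ℝ) (B : Finset (Fin n)),
      lovMinOn B (fun i => t * y i) = t * lovMinOn B y := by
    intro y B
    unfold lovMinOn
    split
    · next h =>
      apply le_antisymm
      · obtain ⟨i, hi, hval⟩ := B.exists_mem_eq_inf' h y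
        calc B.inf' h (fun i => t * y i) ≤ t * y i := Finset.inf'_le _ hi
          _ = t * B.inf' h y := by rw [← hval]
      · apply Finset.le_inf'
        intro j hj
        exact mul_le_mul_of_nonneg_left (Finset.inf'_le _ hj) ht
    · simp
  simp only [Lov, hz, hs (fun i => -(ind A i)), mul_zero, Finset.sum_const_zero,
    add_zero, add_sub_cancel_left]
  rw [Finset.mul_sum]
  exact Finset.sum_congr rfl fun B _ => by ring
end

section
/- Let I be a real interval with [0,1] ⊆ I ⊆ ℝ₊ and let f : Iⁿ → ℝ be a nonconstant function. Then the following are equivalent: (i) f is a quasi-Lovász extension and there exists A ⊆ [n] such that f_0(1_A) ≠ 0; (ii) f is comonotonically modular (equivalently, invariant under horizontal min-differences) and f_0 is weakly homogeneous; (iii) there is a nondecreasing function φ_f : I → ℝ with φ_f(0) = 0 and φ_f(1) = 1 such that f = L_{f|_{{0,1}ⁿ}} ∘ φ_f, where L_{f|_{{0,1}ⁿ}} is the Lovász extension of the restriction of f to {0,1}ⁿ. -/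
open Finset

/-- `f` is comonotonically modular on `Iⁿ`:
`f(x) + f(x′) = f(x ∧ x′) + f(x ∨ x′)` for all comonotonic `x, x′ ∈ Iⁿ`. -/
def ComonModular {n : ℕ} (I : Set ℝ) (f : (Fin n → ℝ) → ℝ) : Prop :=
  ∀ σ : Equiv.Perm (Fin n), ∀ x y : Fin n → ℝ,
    (∀ i, x i ∈ I) → (∀ i, y i ∈ I) → inRσ σ x → inRσ σ y →
    f x + f y = f (fun i => min (x i) (y i)) + f (fun i => max (x i) (y i))

/-- `f` is invariant under horizontal min-differences on `Iⁿ` (`I ⊆ ℝ₊`). -/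
def InvHMin {n : ℕ} (I : Set ℝ) (f : (Fin n → ℝ) → ℝ) : Prop :=
  ∀ x : Fin n → ℝ, (∀ i, x i ∈ I) → ∀ c ∈ I,
    f x - f (fun i => min (x i) c) =
      f (fun i => if x i ≤ c then 0 else x i) -
      f (fun i => min (if x i ≤ c then 0 else x i) c)

/-- Weak homogeneity of `h : Iⁿ → ℝ` for `I ⊆ ℝ₊`. -/
def WeaklyHomPos {n : ℕ} (I : Set ℝ) (h : (Fin n → ℝ) → ℝ) : Prop :=
  ∃ χ : ℝ → ℝ, MonotoneOn χ I ∧ χ 0 = 0 ∧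
    ∀ x ∈ I, ∀ A : Finset (Fin n), h (fun i => x * ind A i) = χ x * h (ind A)

/-- `f : Iⁿ → ℝ` is a quasi-Lovász extension: `f = L ∘ φ` for a Lovász extension `L` and a
nondecreasing `φ : I → ℝ` with `φ(0) = 0`. -/
def IsQLE {n : ℕ} (I : Set ℝ) (f : (Fin n → ℝ) → ℝ) : Prop :=
  ∃ ψ : Finset (Fin n) → ℝ, ∃ φ : ℝ → ℝ, MonotoneOn φ I ∧ φ 0 = 0 ∧
    ∀ x : Fin n → ℝ, (∀ i, x i ∈ I) → f x = Lov ψ (fun i => φ (x i))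

section helpers
variable {n : ℕ}

lemma ind_empty : ind (∅ : Finset (Fin n)) = fun _ => (0:ℝ) := by
  funext i; simp [ind]

lemma ind_nonneg (A : Finset (Fin n)) (i : Fin n) : 0 ≤ ind A i := by
  unfold ind; split <;> norm_num

lemma mobius_empty (ψ : Finset (Fin n) → ℝ) : mobius ψ ∅ = ψ ∅ := by
  simp [mobius]

lemma alt_sum {A : Finset (Fin n)} (hA : A ≠ ∅) :
    ∑ B ∈ A.powerset, (-1:ℝ) ^ (A.card - B.card) = 0 := by
  have h : ∀ B ∈ A.powerset,
      (-1:ℝ) ^ (A.card - B.card) = (-1)^A.card * (-1)^B.card := by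
    intro B hB
    have hle : B.card ≤ A.card := card_le_card (mem_powerset.1 hB)
    have h1 : (-1:ℝ) ^ (A.card - B.card) * (-1)^B.card = (-1)^A.card := by
      rw [← pow_add, Nat.sub_add_cancel hle]
    have h2 : (-1:ℝ)^B.card * (-1)^B.card = 1 := by
      rw [← mul_pow]; norm_num
    linear_combination (-1:ℝ)^B.card * h1 - (-1:ℝ)^(A.card - B.card) * h2
  rw [Finset.sum_congr rfl h, ← Finset.mul_sum]
  have hz : (∑ B ∈ A.powerset, (-1 : ℤ) ^ B.card) = 0 := by
    rw [Finset.sum_powerset_neg_one_pow_card, if_neg hA]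
  have hzr : (∑ B ∈ A.powerset, (-1 : ℝ) ^ B.card) = 0 := by
    have := congrArg (fun z : ℤ => (z : ℝ)) hz
    push_cast at this
    exact this
  rw [hzr, mul_zero]

lemma mobius_affine (ψ : Finset (Fin n) → ℝ) (κ c : ℝ) {A : Finset (Fin n)} (hA : A ≠ ∅) :
    mobius (fun B => κ + c * ψ B) A = c * mobius ψ A := by
  unfold mobius
  rw [Finset.mul_sum]
  have : ∀ B ∈ A.powerset, (-1:ℝ) ^ (A.card - B.card) * (κ + c * ψ B)
      = (-1:ℝ) ^ (A.card - B.card) * κ + c * ((-1:ℝ) ^ (A.card - B.card) * ψ B) := by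
    intro B _; ring
  rw [Finset.sum_congr rfl this, Finset.sum_add_distrib, ← Finset.sum_mul, alt_sum hA]
  rw [← Finset.mul_sum]
  ring

lemma mobius_const (κ : ℝ) {A : Finset (Fin n)} (hA : A ≠ ∅) :
    mobius (fun _ => κ) A = 0 := by
  have := mobius_affine (fun _ => (0:ℝ)) κ 0 hA
  simpa using this

lemma mobius_inversion (ψ : Finset (Fin n) → ℝ) (S : Finset (Fin n)) :
    ∑ A ∈ S.powerset, mobius ψ A = ψ S := by
  unfold mobius
  have hpow : ∀ A ∈ S.powerset, A.powerset = S.powerset.filter (· ⊆ A) := by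
    intro A hA; ext B
    simp only [mem_powerset, mem_filter]
    exact ⟨fun h => ⟨h.trans (mem_powerset.1 hA), h⟩, fun h => h.2⟩
  calc ∑ A ∈ S.powerset, ∑ B ∈ A.powerset, (-1:ℝ)^(A.card - B.card) * ψ B
      = ∑ A ∈ S.powerset, ∑ B ∈ S.powerset,
          if B ⊆ A then (-1:ℝ)^(A.card - B.card) * ψ B else 0 := by
        refine Finset.sum_congr rfl fun A hA => ?_
        rw [hpow A hA, Finset.sum_filter]
    _ = ∑ B ∈ S.powerset, ∑ A ∈ S.powerset,
          if B ⊆ A then (-1:ℝ)^(A.card - B.card) * ψ B else 0 := Finset.sum_comm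
    _ = ∑ B ∈ S.powerset, if B = S then ψ B else 0 := by
        refine Finset.sum_congr rfl fun B hB => ?_
        have hBS : B ⊆ S := mem_powerset.1 hB
        rw [← Finset.sum_filter]
        have hre : ∑ A ∈ S.powerset.filter (fun A => B ⊆ A),
            (-1:ℝ)^(A.card - B.card) * ψ B
            = ∑ C ∈ (S \ B).powerset, (-1:ℝ)^C.card * ψ B := by
          refine Finset.sum_nbij' (fun A => A \ B) (fun C => C ∪ B) ?_ ?_ ?_ ?_ ?_
          · intro A hA
            simp only [mem_filter, mem_powerset] at hA
            exact mem_powerset.2 (sdiff_subset_sdiff hA.1 le_rfl)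
          · intro C hC
            simp only [mem_powerset] at hC
            simp only [mem_filter, mem_powerset]
            exact ⟨union_subset (hC.trans (sdiff_subset)) hBS, subset_union_right⟩
          · intro A hA
            simp only [mem_filter, mem_powerset] at hA
            show A \ B ∪ B = A
            exact sdiff_union_of_subset hA.2
          · intro C hC
            simp only [mem_powerset] at hC
            have hd : Disjoint C B :=
              Finset.disjoint_of_subset_left hC sdiff_disjoint
            show (C ∪ B) \ B = C
            exact union_sdiff_cancel_right hd
          · intro A hA
            simp only [mem_filter, mem_powerset] at hA
            rw [card_sdiff_of_subset hA.2]
        rw [hre, ← Finset.sum_mul]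
        have hz : (∑ C ∈ (S \ B).powerset, (-1:ℝ)^C.card)
            = if S \ B = ∅ then 1 else 0 := by
          have hz' := Finset.sum_powerset_neg_one_pow_card (x := S \ B)
          have := congrArg (fun z : ℤ => (z : ℝ)) hz'
          push_cast at this
          exact this
        rw [hz]
        by_cases hBSeq : B = S
        · rw [if_pos, if_pos hBSeq, one_mul]
          rw [hBSeq, sdiff_self]; rfl
        · rw [if_neg, if_neg hBSeq, zero_mul]
          intro h
          exact hBSeq (subset_antisymm hBS (sdiff_eq_empty_iff_subset.1 h))
    _ = ψ S := by
        rw [Finset.sum_ite_eq' S.powerset S ψ]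
        rw [if_pos (mem_powerset.2 le_rfl)]

lemma sum_mobius_filter_ne (ψ : Finset (Fin n) → ℝ) (S : Finset (Fin n)) :
    ∑ A ∈ S.powerset.filter (· ≠ ∅), mobius ψ A = ψ S - ψ ∅ := by
  have h1 : S.powerset.filter (· ≠ ∅) = S.powerset.erase ∅ := filter_ne' _ _
  have h2 : ∑ A ∈ S.powerset.erase ∅, mobius ψ A + mobius ψ ∅
      = ∑ A ∈ S.powerset, mobius ψ A :=
    Finset.sum_erase_add _ _ (mem_powerset.2 (empty_subset _))
  rw [h1]
  rw [mobius_inversion] at h2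
  rw [mobius_empty] at h2
  linarith

end helpers

section minOnLemmas
variable {n : ℕ}

lemma minOn_empty (x : Fin n → ℝ) : lovMinOn (∅ : Finset (Fin n)) x = 0 := by
  simp [lovMinOn]

lemma minOn_eq_of_forall {A : Finset (Fin n)} {x : Fin n → ℝ} {k : Fin n} (hk : k ∈ A)
    (hmin : ∀ i ∈ A, x k ≤ x i) : lovMinOn A x = x k := by
  rw [lovMinOn, dif_pos ⟨k, hk⟩]
  exact le_antisymm (Finset.inf'_le _ hk) (Finset.le_inf' _ _ hmin)

lemma minOn_zero (A : Finset (Fin n)) : lovMinOn A (fun _ => (0:ℝ)) = 0 := by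
  rcases A.eq_empty_or_nonempty with rfl | ⟨k, hk⟩
  · exact minOn_empty _
  · exact minOn_eq_of_forall hk (fun i _ => le_rfl)

lemma minOn_congr {A : Finset (Fin n)} {x y : Fin n → ℝ}
    (h : ∀ i ∈ A, x i = y i) : lovMinOn A x = lovMinOn A y := by
  rcases A.eq_empty_or_nonempty with rfl | hA
  · simp [minOn_empty]
  · rw [lovMinOn, lovMinOn, dif_pos hA, dif_pos hA]
    exact Finset.inf'_congr hA rfl h

lemma minOn_eq_zero {A : Finset (Fin n)} {g : Fin n → ℝ} {k : Fin n} (hk : k ∈ A)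
    (hgk : g k = 0) (hg : ∀ i ∈ A, 0 ≤ g i) : lovMinOn A g = 0 := by
  rw [minOn_eq_of_forall hk (fun i hi => hgk ▸ hg i hi)]
  exact hgk

lemma minOn_smul_ind {c : ℝ} (hc : 0 ≤ c) (A B : Finset (Fin n)) :
    lovMinOn B (fun i => c * ind A i) = if B ⊆ A ∧ B.Nonempty then c else 0 := by
  rcases B.eq_empty_or_nonempty with rfl | hB
  · simp [minOn_empty]
  by_cases hBA : B ⊆ A
  · rw [if_pos ⟨hBA, hB⟩]
    have hval : ∀ i ∈ B, c * ind A i = c := by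
      intro i hi; simp [ind, hBA hi]
    obtain ⟨k, hk⟩ := hB
    rw [minOn_eq_of_forall hk (fun i hi => by rw [hval i hi, hval k hk])]
    exact hval k hk
  · rw [if_neg (fun h => hBA h.1)]
    obtain ⟨k, hk, hkA⟩ := Finset.not_subset.1 hBA
    have hgk : c * ind A k = 0 := by simp [ind, hkA]
    exact minOn_eq_zero hk hgk
      (fun i _ => mul_nonneg hc (ind_nonneg A i))

lemma minOn_smul {c : ℝ} (hc : 0 ≤ c) (A : Finset (Fin n)) (g : Fin n → ℝ) :
    lovMinOn A (fun i => c * g i) = c * lovMinOn A g := by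
  rcases A.eq_empty_or_nonempty with rfl | hA
  · simp [minOn_empty]
  obtain ⟨k, hk, hkeq⟩ := Finset.exists_mem_eq_inf' hA g
  have hmin : ∀ i ∈ A, g k ≤ g i := by
    intro i hi; rw [← hkeq]; exact Finset.inf'_le _ hi
  rw [minOn_eq_of_forall hk hmin,
    minOn_eq_of_forall hk (fun i hi => mul_le_mul_of_nonneg_left (hmin i hi) hc)]

lemma Lov_zero (ψ : Finset (Fin n) → ℝ) : Lov ψ (fun _ => (0:ℝ)) = ψ ∅ := by
  unfold Lov
  rw [mobius_empty]
  rw [Finset.sum_congr rfl (fun A _ => by rw [minOn_zero, mul_zero]),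
    Finset.sum_const_zero, add_zero]

lemma Lov_smul_ind {c : ℝ} (hc : 0 ≤ c) (ψ : Finset (Fin n) → ℝ) (A : Finset (Fin n)) :
    Lov ψ (fun i => c * ind A i) = ψ ∅ + c * (ψ A - ψ ∅) := by
  unfold Lov
  rw [mobius_empty]
  congr 1
  have h1 : ∀ B : Finset (Fin n), mobius ψ B * lovMinOn B (fun i => c * ind A i)
      = if B ⊆ A ∧ B.Nonempty then mobius ψ B * c else 0 := by
    intro B
    rw [minOn_smul_ind hc]
    split <;> simp
  rw [Finset.sum_congr rfl (fun B _ => h1 B), Finset.sum_ite, Finset.sum_const_zero,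
    add_zero]
  have h2 : univ.filter (fun B : Finset (Fin n) => B ⊆ A ∧ B.Nonempty)
      = A.powerset.filter (· ≠ ∅) := by
    ext B
    simp [Finset.nonempty_iff_ne_empty]
  rw [h2, ← Finset.sum_mul, sum_mobius_filter_ne]
  ring

lemma sum_mobius_ind (ψ : Finset (Fin n) → ℝ) (S : Finset (Fin n)) :
    ∑ A : Finset (Fin n), mobius ψ A * (if A ⊆ S ∧ A.Nonempty then (1:ℝ) else 0)
      = ψ S - ψ ∅ := by
  have h1 : ∀ A : Finset (Fin n), mobius ψ A * (if A ⊆ S ∧ A.Nonempty then (1:ℝ) else 0)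
      = if A ⊆ S ∧ A.Nonempty then mobius ψ A else 0 := by
    intro A; split <;> simp
  rw [Finset.sum_congr rfl (fun A _ => h1 A), Finset.sum_ite, Finset.sum_const_zero,
    add_zero]
  have h2 : univ.filter (fun A : Finset (Fin n) => A ⊆ S ∧ A.Nonempty)
      = S.powerset.filter (· ≠ ∅) := by
    ext A
    simp [Finset.nonempty_iff_ne_empty]
  rw [h2, sum_mobius_filter_ne]

lemma Lov_const {ψ : Finset (Fin n) → ℝ} (h : ∀ A, ψ A = ψ ∅) (z : Fin n → ℝ) :
    Lov ψ z = ψ ∅ := by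
  unfold Lov
  rw [mobius_empty]
  have hz : ∀ A : Finset (Fin n), mobius ψ A * lovMinOn A z = 0 := by
    intro A
    rcases eq_or_ne A ∅ with rfl | hA
    · rw [minOn_empty, mul_zero]
    · have hψ : ψ = fun _ => ψ ∅ := funext h
      rw [hψ, mobius_const _ hA, zero_mul]
  rw [Finset.sum_congr rfl (fun A _ => hz A), Finset.sum_const_zero, add_zero]

end minOnLemmas

section sorted
variable {n : ℕ}

lemma inRσ_sort (x : Fin n → ℝ) : inRσ (Tuple.sort x) x :=
  fun _ _ hij => Tuple.monotone_sort x hij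

lemma inRσ_comp {σ : Equiv.Perm (Fin n)} {x : Fin n → ℝ} {I : Set ℝ} {χ : ℝ → ℝ}
    (hx : inRσ σ x) (hxI : ∀ i, x i ∈ I) (hχ : MonotoneOn χ I) :
    inRσ σ (fun i => χ (x i)) :=
  fun i j hij => hχ (hxI _) (hxI _) (hx i j hij)

lemma inRσ_min_const {σ : Equiv.Perm (Fin n)} {x : Fin n → ℝ} (hx : inRσ σ x) (c : ℝ) :
    inRσ σ (fun i => min (x i) c) :=
  fun i j hij => min_le_min (hx i j hij) le_rfl

lemma inRσ_cut {σ : Equiv.Perm (Fin n)} {x : Fin n → ℝ} (hx : inRσ σ x)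
    (hx0 : ∀ i, 0 ≤ x i) {c : ℝ} (hc : 0 ≤ c) :
    inRσ σ (fun i => if x i ≤ c then 0 else x i) := by
  intro i j hij
  dsimp only
  by_cases h1 : x (σ i) ≤ c <;> by_cases h2 : x (σ j) ≤ c
  · simp [h1, h2]
  · simp only [if_pos h1, if_neg h2]
    exact hx0 _
  · exact absurd ((hx i j hij).trans h2) h1
  · simp only [if_neg h1, if_neg h2]
    exact hx i j hij

/-- Common minimizer over `A` for all `σ`-sorted tuples. -/
lemma exists_common_min {σ : Equiv.Perm (Fin n)} {A : Finset (Fin n)} (hA : A.Nonempty) :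
    ∃ k ∈ A, ∀ z : Fin n → ℝ, inRσ σ z → ∀ i ∈ A, z k ≤ z i := by
  have himg : (A.image σ.symm).Nonempty := hA.image _
  set j := (A.image σ.symm).min' himg with hj
  have hjmem := Finset.min'_mem (A.image σ.symm) himg
  obtain ⟨a, ha, hae⟩ := Finset.mem_image.1 hjmem
  refine ⟨σ j, by rw [hj, ← hae, Equiv.apply_symm_apply]; exact ha, ?_⟩
  intro z hz i hi
  have : j ≤ σ.symm i := Finset.min'_le _ _ (Finset.mem_image_of_mem _ hi)
  have h2 := hz j (σ.symm i) this
  rwa [Equiv.apply_symm_apply] at h2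

lemma minOn_modular {σ : Equiv.Perm (Fin n)} {x y : Fin n → ℝ}
    (hx : inRσ σ x) (hy : inRσ σ y) (A : Finset (Fin n)) :
    lovMinOn A x + lovMinOn A y =
      lovMinOn A (fun i => min (x i) (y i)) + lovMinOn A (fun i => max (x i) (y i)) := by
  rcases A.eq_empty_or_nonempty with rfl | hA
  · simp [minOn_empty]
  obtain ⟨k, hk, hcm⟩ := exists_common_min (σ := σ) hA
  have hxk := hcm x hx
  have hyk := hcm y hy
  rw [minOn_eq_of_forall hk hxk, minOn_eq_of_forall hk hyk,
    minOn_eq_of_forall hk (fun i hi => min_le_min (hxk i hi) (hyk i hi)),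
    minOn_eq_of_forall hk (fun i hi => max_le_max (hxk i hi) (hyk i hi))]
  exact (min_add_max _ _).symm

lemma Lov_modular (ψ : Finset (Fin n) → ℝ) {σ : Equiv.Perm (Fin n)} {x y : Fin n → ℝ}
    (hx : inRσ σ x) (hy : inRσ σ y) :
    Lov ψ x + Lov ψ y =
      Lov ψ (fun i => min (x i) (y i)) + Lov ψ (fun i => max (x i) (y i)) := by
  unfold Lov
  have key : ∑ A : Finset (Fin n), mobius ψ A * lovMinOn A x
        + ∑ A : Finset (Fin n), mobius ψ A * lovMinOn A y
      = ∑ A : Finset (Fin n), mobius ψ A * lovMinOn A (fun i => min (x i) (y i))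
        + ∑ A : Finset (Fin n), mobius ψ A * lovMinOn A (fun i => max (x i) (y i)) := by
    rw [← Finset.sum_add_distrib, ← Finset.sum_add_distrib]
    refine Finset.sum_congr rfl fun A _ => ?_
    rw [← mul_add, ← mul_add, minOn_modular hx hy A]
  linarith

end sorted

section diff
variable {n : ℕ} {I : Set ℝ}

lemma minOn_diff (h0 : (0:ℝ) ∈ I) (hIpos : I ⊆ Set.Ici (0:ℝ)) {χ : ℝ → ℝ}
    (hmono : MonotoneOn χ I) (hχ0 : χ 0 = 0)
    {x : Fin n → ℝ} (hxI : ∀ i, x i ∈ I) {c : ℝ} (hcI : c ∈ I) (hc : 0 < c)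
    (hsplit : ∀ i, x i = 0 ∨ c ≤ x i) (A : Finset (Fin n)) :
    lovMinOn A (fun i => χ (x i)) - lovMinOn A (fun i => χ (if x i ≤ c then 0 else x i)) =
      χ c * ((if A ⊆ univ.filter (fun i => x i ≠ 0) ∧ A.Nonempty then (1:ℝ) else 0)
           - (if A ⊆ univ.filter (fun i => c < x i) ∧ A.Nonempty then (1:ℝ) else 0)) := by
  have hx0 : ∀ i, 0 ≤ x i := fun i => hIpos (hxI i)
  have hx'I : ∀ i, (if x i ≤ c then 0 else x i) ∈ I := by
    intro i; split
    · exact h0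
    · exact hxI i
  have hχx : ∀ i, 0 ≤ χ (x i) := by
    intro i
    have := hmono h0 (hxI i) (hx0 i)
    rwa [hχ0] at this
  have hχx' : ∀ i, 0 ≤ χ (if x i ≤ c then 0 else x i) := by
    intro i
    have := hmono h0 (hx'I i) (hIpos (hx'I i))
    rwa [hχ0] at this
  rcases A.eq_empty_or_nonempty with rfl | hA
  · simp [minOn_empty]
  obtain ⟨i0, hi0, hmin⟩ := Finset.exists_min_image A x hA
  rcases hsplit i0 with h00 | hcle
  · -- min value is 0
    have e1 : lovMinOn A (fun i => χ (x i)) = 0 :=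
      minOn_eq_zero hi0 (by rw [h00, hχ0]) (fun i _ => hχx i)
    have e2 : lovMinOn A (fun i => χ (if x i ≤ c then 0 else x i)) = 0 :=
      minOn_eq_zero hi0 (by rw [if_pos (h00 ▸ hc.le), hχ0]) (fun i _ => hχx' i)
    have n1 : ¬(A ⊆ univ.filter (fun i => x i ≠ 0) ∧ A.Nonempty) := by
      rintro ⟨hsub, -⟩
      have := hsub hi0
      rw [Finset.mem_filter] at this
      exact this.2 h00
    have n2 : ¬(A ⊆ univ.filter (fun i => c < x i) ∧ A.Nonempty) := by
      rintro ⟨hsub, -⟩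
      have := hsub hi0
      rw [Finset.mem_filter] at this
      rw [h00] at this
      exact absurd this.2 (not_lt.2 hc.le)
    rw [e1, e2, if_neg n1, if_neg n2]
    ring
  · have p1 : A ⊆ univ.filter (fun i => x i ≠ 0) := by
      intro i hi
      rw [Finset.mem_filter]
      exact ⟨Finset.mem_univ _, ne_of_gt (hc.trans_le (hcle.trans (hmin i hi)))⟩
    by_cases hlt : c < x i0
    · -- all entries > c, the two functions agree on A
      have heq : ∀ i ∈ A, χ (x i) = χ (if x i ≤ c then 0 else x i) := by
        intro i hi
        rw [if_neg (not_le.2 (hlt.trans_le (hmin i hi)))]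
      have p2 : A ⊆ univ.filter (fun i => c < x i) := by
        intro i hi
        rw [Finset.mem_filter]
        exact ⟨Finset.mem_univ _, hlt.trans_le (hmin i hi)⟩
      rw [minOn_congr heq, if_pos ⟨p1, hA⟩, if_pos ⟨p2, hA⟩]
      ring
    · -- min value is exactly c
      have hxc : x i0 = c := le_antisymm (not_lt.1 hlt) hcle
      have e1 : lovMinOn A (fun i => χ (x i)) = χ c := by
        rw [minOn_eq_of_forall hi0
          (fun i hi => hmono (hxI i0) (hxI i) (hmin i hi)), hxc]
      have e2 : lovMinOn A (fun i => χ (if x i ≤ c then 0 else x i)) = 0 :=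
        minOn_eq_zero hi0 (by rw [if_pos (le_of_eq hxc), hχ0]) (fun i _ => hχx' i)
      have n2 : ¬(A ⊆ univ.filter (fun i => c < x i) ∧ A.Nonempty) := by
        rintro ⟨hsub, -⟩
        have := hsub hi0
        rw [Finset.mem_filter, hxc] at this
        exact absurd this.2 (lt_irrefl c)
      rw [e1, e2, if_pos ⟨p1, hA⟩, if_neg n2]
      ring

lemma Lov_diff (h0 : (0:ℝ) ∈ I) (hIpos : I ⊆ Set.Ici (0:ℝ)) {χ : ℝ → ℝ}
    (hmono : MonotoneOn χ I) (hχ0 : χ 0 = 0)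
    {x : Fin n → ℝ} (hxI : ∀ i, x i ∈ I) {c : ℝ} (hcI : c ∈ I) (hc : 0 < c)
    (hsplit : ∀ i, x i = 0 ∨ c ≤ x i) (ψ : Finset (Fin n) → ℝ) :
    Lov ψ (fun i => χ (x i)) - Lov ψ (fun i => χ (if x i ≤ c then 0 else x i)) =
      χ c * (ψ (univ.filter (fun i => x i ≠ 0)) - ψ (univ.filter (fun i => c < x i))) := by
  unfold Lov
  have key : ∑ A : Finset (Fin n), mobius ψ A * lovMinOn A (fun i => χ (x i))
      - ∑ A : Finset (Fin n), mobius ψ A * lovMinOn A (fun i => χ (if x i ≤ c then 0 else x i))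
      = χ c * ((ψ (univ.filter (fun i => x i ≠ 0)) - ψ ∅)
             - (ψ (univ.filter (fun i => c < x i)) - ψ ∅)) := by
    rw [← Finset.sum_sub_distrib]
    have hterm : ∀ A : Finset (Fin n),
        mobius ψ A * lovMinOn A (fun i => χ (x i))
          - mobius ψ A * lovMinOn A (fun i => χ (if x i ≤ c then 0 else x i))
        = χ c * (mobius ψ A *
            (if A ⊆ univ.filter (fun i => x i ≠ 0) ∧ A.Nonempty then (1:ℝ) else 0))
        - χ c * (mobius ψ A *
            (if A ⊆ univ.filter (fun i => c < x i) ∧ A.Nonempty then (1:ℝ) else 0)) := by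
      intro A
      have := minOn_diff h0 hIpos hmono hχ0 hxI hcI hc hsplit A
      linear_combination (mobius ψ A) * this
    rw [Finset.sum_congr rfl (fun A _ => hterm A), Finset.sum_sub_distrib,
      ← Finset.mul_sum, ← Finset.mul_sum, sum_mobius_ind, sum_mobius_ind]
    ring
  linarith

end diff

section master
variable {n : ℕ} {I : Set ℝ}

lemma master (h0 : (0:ℝ) ∈ I) (hIpos : I ⊆ Set.Ici (0:ℝ))
    {f : (Fin n → ℝ) → ℝ} (hInv : InvHMin I f) {χ : ℝ → ℝ}
    (hmono : MonotoneOn χ I) (hχ0 : χ 0 = 0)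
    (hhom : ∀ t ∈ I, ∀ A : Finset (Fin n),
      f (fun i => t * ind A i) - f (fun _ => 0) = χ t * (f (ind A) - f (fun _ => 0))) :
    ∀ x : Fin n → ℝ, (∀ i, x i ∈ I) →
      f x = Lov (fun A => f (ind A)) (fun i => χ (x i)) := by
  suffices H : ∀ m : ℕ, ∀ x : Fin n → ℝ, (univ.filter fun i => x i ≠ 0).card ≤ m →
      (∀ i, x i ∈ I) → f x = Lov (fun A => f (ind A)) (fun i => χ (x i)) by
    intro x hx
    exact H _ x le_rfl hx
  intro m
  induction m with
  | zero =>
    intro x hcard hxI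
    have hx0 : ∀ i, x i = 0 := by
      intro i
      by_contra h
      have : i ∈ univ.filter fun i => x i ≠ 0 := Finset.mem_filter.2 ⟨mem_univ _, h⟩
      have := Finset.card_pos.2 ⟨i, this⟩
      omega
    have h1 : x = fun _ => 0 := funext hx0
    have h2 : (fun i => χ (x i)) = fun _ => (0:ℝ) := funext fun i => by rw [hx0 i, hχ0]
    rw [h2, Lov_zero, h1, ind_empty]
  | succ m IH =>
    intro x hcard hxI
    by_cases hm : (univ.filter fun i => x i ≠ 0).card ≤ m
    · exact IH x hm hxI
    have hS : (univ.filter fun i => x i ≠ 0).Nonempty := Finset.card_pos.1 (by omega)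
    obtain ⟨i0, hi0S, hi0min⟩ := Finset.exists_min_image _ x hS
    set c := x i0 with hcdef
    have hi0ne : x i0 ≠ 0 := (Finset.mem_filter.1 hi0S).2
    have hc : 0 < c := lt_of_le_of_ne (hIpos (hxI i0)) (Ne.symm hi0ne)
    have hcI : c ∈ I := hxI i0
    have hsplit : ∀ i, x i = 0 ∨ c ≤ x i := by
      intro i
      by_cases h : x i = 0
      · exact Or.inl h
      · exact Or.inr (hi0min i (Finset.mem_filter.2 ⟨mem_univ _, h⟩))
    have hEq := hInv x hxI c hcI
    have hx0 : ∀ i, 0 ≤ x i := fun i => hIpos (hxI i)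
    -- rewrite x ∧ c as c • 1_S
    have hvS : (fun i => min (x i) c) =
        fun i => c * ind (univ.filter fun i => x i ≠ 0) i := by
      funext i
      rcases hsplit i with h | h
      · rw [h, min_eq_left hc.le]
        have : i ∉ univ.filter fun i => x i ≠ 0 := by
          simp [Finset.mem_filter, h]
        simp [ind, this]
      · rw [min_eq_right h]
        have : i ∈ univ.filter fun i => x i ≠ 0 :=
          Finset.mem_filter.2 ⟨mem_univ _, ne_of_gt (hc.trans_le h)⟩
        simp [ind, this]
    have hvB : (fun i => min (if x i ≤ c then 0 else x i) c) =
        fun i => c * ind (univ.filter fun i => c < x i) i := by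
      funext i
      by_cases h : x i ≤ c
      · rw [if_pos h, min_eq_left hc.le]
        have : i ∉ univ.filter fun i => c < x i := by
          simp [Finset.mem_filter, not_lt.2 h]
        simp [ind, this]
      · rw [if_neg h, min_eq_right (le_of_lt (not_le.1 h))]
        have : i ∈ univ.filter fun i => c < x i :=
          Finset.mem_filter.2 ⟨mem_univ _, not_le.1 h⟩
        simp [ind, this]
    rw [hvS, hvB] at hEq
    -- induction hypothesis applies to the cut vector
    have hx'I : ∀ i, (if x i ≤ c then 0 else x i) ∈ I := by
      intro i; split
      · exact h0
      · exact hxI i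
    have hsupp' : (univ.filter fun i => (if x i ≤ c then 0 else x i) ≠ 0)
        = univ.filter fun i => c < x i := by
      ext i
      simp only [Finset.mem_filter, mem_univ, true_and]
      by_cases h : x i ≤ c
      · simp [if_pos h, not_lt.2 h]
      · have := hc.trans (not_le.1 h)
        simp [if_neg h, not_le.1 h, ne_of_gt this]
    have hBS : (univ.filter fun i => c < x i) ⊆ univ.filter fun i => x i ≠ 0 := by
      intro i hi
      rw [Finset.mem_filter] at hi ⊢
      exact ⟨hi.1, ne_of_gt (hc.trans hi.2)⟩
    have hi0notB : i0 ∉ univ.filter fun i => c < x i := by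
      rw [Finset.mem_filter]
      rintro ⟨-, h⟩
      exact absurd h (lt_irrefl c)
    have hcard' : (univ.filter fun i => (if x i ≤ c then 0 else x i) ≠ 0).card ≤ m := by
      rw [hsupp']
      have := Finset.card_lt_card
        ((Finset.ssubset_iff_of_subset hBS).2 ⟨i0, hi0S, hi0notB⟩)
      omega
    have hfx' := IH (fun i => if x i ≤ c then 0 else x i) hcard' hx'I
    have hLd := Lov_diff h0 hIpos hmono hχ0 hxI hcI hc hsplit (fun A => f (ind A))
    have hh1 := hhom c hcI (univ.filter fun i => x i ≠ 0)
    have hh2 := hhom c hcI (univ.filter fun i => c < x i)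
    linarith
end master

section implications
variable {n : ℕ} {I : Set ℝ} {f : (Fin n → ℝ) → ℝ}

lemma indI (h0 : (0:ℝ) ∈ I) (h1 : (1:ℝ) ∈ I) (A : Finset (Fin n)) (i : Fin n) :
    ind A i ∈ I := by
  unfold ind; split
  · exact h1
  · exact h0

lemma P3_to_P2 (h0 : (0:ℝ) ∈ I) (h1 : (1:ℝ) ∈ I) (hIpos : I ⊆ Set.Ici (0:ℝ))
    {φf : ℝ → ℝ} (hmono : MonotoneOn φf I) (hφ0 : φf 0 = 0)
    (hF : ∀ x : Fin n → ℝ, (∀ i, x i ∈ I) →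
      f x = Lov (fun A => f (ind A)) (fun i => φf (x i))) :
    ComonModular I f ∧ WeaklyHomPos I (fun y => f y - f (fun _ => 0)) := by
  constructor
  · intro σ x y hxI hyI hxσ hyσ
    have hminI : ∀ i, min (x i) (y i) ∈ I := fun i => by
      rcases le_total (x i) (y i) with h | h
      · rw [min_eq_left h]; exact hxI i
      · rw [min_eq_right h]; exact hyI i
    have hmaxI : ∀ i, max (x i) (y i) ∈ I := fun i => by
      rcases le_total (x i) (y i) with h | h
      · rw [max_eq_right h]; exact hyI i
      · rw [max_eq_left h]; exact hxI i
    rw [hF x hxI, hF y hyI, hF _ hminI, hF _ hmaxI]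
    have e1 : (fun i => φf (min (x i) (y i))) = fun i => min (φf (x i)) (φf (y i)) := by
      funext i
      rcases le_total (x i) (y i) with h | h
      · rw [min_eq_left h, min_eq_left (hmono (hxI i) (hyI i) h)]
      · rw [min_eq_right h, min_eq_right (hmono (hyI i) (hxI i) h)]
    have e2 : (fun i => φf (max (x i) (y i))) = fun i => max (φf (x i)) (φf (y i)) := by
      funext i
      rcases le_total (x i) (y i) with h | h
      · rw [max_eq_right h, max_eq_right (hmono (hxI i) (hyI i) h)]
      · rw [max_eq_left h, max_eq_left (hmono (hyI i) (hxI i) h)]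
    rw [e1, e2]
    exact Lov_modular _ (inRσ_comp hxσ hxI hmono) (inRσ_comp hyσ hyI hmono)
  · refine ⟨φf, hmono, hφ0, ?_⟩
    intro t htI A
    have htent : ∀ i, t * ind A i ∈ I := by
      intro i; unfold ind; split
      · rw [mul_one]; exact htI
      · rw [mul_zero]; exact h0
    have hstep : (fun i => φf (t * ind A i)) = fun i => φf t * ind A i := by
      funext i; unfold ind; split
      · rw [mul_one, mul_one]
      · rw [mul_zero, hφ0, mul_zero]
    have hφt : 0 ≤ φf t := by
      have := hmono h0 htI (hIpos htI)
      rwa [hφ0] at this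
    have e1 : f (fun i => t * ind A i) =
        f (ind (∅ : Finset (Fin n))) + φf t * (f (ind A) - f (ind ∅)) := by
      rw [hF _ htent, hstep, Lov_smul_ind hφt]
    have e0 : f (fun _ : Fin n => (0:ℝ)) = f (ind (∅ : Finset (Fin n))) := by
      rw [ind_empty]
    dsimp only
    rw [e1, e0]
    ring

lemma P3_to_P1
    (hnc : ∃ x y : Fin n → ℝ, (∀ i, x i ∈ I) ∧ (∀ i, y i ∈ I) ∧ f x ≠ f y)
    {φf : ℝ → ℝ} (hmono : MonotoneOn φf I) (hφ0 : φf 0 = 0)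
    (hF : ∀ x : Fin n → ℝ, (∀ i, x i ∈ I) →
      f x = Lov (fun A => f (ind A)) (fun i => φf (x i))) :
    IsQLE I f ∧ ∃ A : Finset (Fin n), f (ind A) - f (fun _ => 0) ≠ 0 := by
  refine ⟨⟨fun A => f (ind A), φf, hmono, hφ0, hF⟩, ?_⟩
  by_contra h
  push_neg at h
  have hconst : ∀ A : Finset (Fin n), f (ind A) = f (ind (∅ : Finset (Fin n))) := by
    intro A
    have hA := h A
    have hE := h ∅
    rw [sub_eq_zero] at hA hE
    rw [hA, hE]
  obtain ⟨x₀, y₀, hx₀, hy₀, hne⟩ := hnc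
  have e1 := hF x₀ hx₀
  have e2 := hF y₀ hy₀
  rw [Lov_const hconst] at e1 e2
  exact hne (e1.trans e2.symm)

lemma P1_to_P3 (h0 : (0:ℝ) ∈ I) (h1 : (1:ℝ) ∈ I)
    (hq : IsQLE I f) (hA : ∃ A : Finset (Fin n), f (ind A) - f (fun _ => 0) ≠ 0) :
    ∃ φf : ℝ → ℝ, MonotoneOn φf I ∧ φf 0 = 0 ∧ φf 1 = 1 ∧
      ∀ x : Fin n → ℝ, (∀ i, x i ∈ I) →
        f x = Lov (fun A => f (ind A)) (fun i => φf (x i)) := by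
  obtain ⟨ψ, φ, hφm, hφ0, heq⟩ := hq
  set c := φ 1 with hcdef
  have hc0 : 0 ≤ c := by
    have := hφm h0 h1 zero_le_one
    rwa [hφ0] at this
  have hψ' : ∀ A : Finset (Fin n), f (ind A) = ψ ∅ + c * (ψ A - ψ ∅) := by
    intro A
    rw [heq (ind A) (indI h0 h1 A)]
    have hstep : (fun i => φ (ind A i)) = fun i => c * ind A i := by
      funext i; unfold ind; split
      · rw [mul_one]
      · rw [hφ0, mul_zero]
    rw [hstep, Lov_smul_ind hc0]
  have hf0 : f (fun _ : Fin n => (0:ℝ)) = ψ ∅ := by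
    rw [← ind_empty, hψ' ∅]; ring
  obtain ⟨A0, hA0⟩ := hA
  have hcne : c ≠ 0 := by
    intro h
    apply hA0
    rw [hψ' A0, hf0, h]
    ring
  have hcpos : 0 < c := lt_of_le_of_ne hc0 (Ne.symm hcne)
  refine ⟨fun t => φ t / c, ?_, by simp [hφ0], div_self hcne, ?_⟩
  · intro a ha b hb hab
    exact (div_le_div_iff_of_pos_right hcpos).2 (hφm ha hb hab)
  · intro x hxI
    rw [heq x hxI]
    unfold Lov
    have hψ'fun : (fun A : Finset (Fin n) => f (ind A))
        = fun A => (ψ ∅ - c * ψ ∅) + c * ψ A := by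
      funext A; rw [hψ' A]; ring
    congr 1
    · rw [mobius_empty, mobius_empty, ind_empty, hf0]
    refine Finset.sum_congr rfl fun A _ => ?_
    rcases eq_or_ne A ∅ with rfl | hAne
    · rw [minOn_empty, minOn_empty, mul_zero, mul_zero]
    · rw [hψ'fun, mobius_affine ψ _ _ hAne]
      have hre : (fun i => φ (x i) / c) = fun i => (1/c) * φ (x i) := by
        funext i; ring
      rw [hre, minOn_smul (by positivity) A (fun i => φ (x i))]
      field_simp

lemma CM_to_Inv (h0 : (0:ℝ) ∈ I) (hIpos : I ⊆ Set.Ici (0:ℝ))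
    (hCM : ComonModular I f) : InvHMin I f := by
  intro x hxI c hcI
  have hc0 : 0 ≤ c := hIpos hcI
  have hx0 : ∀ i, 0 ≤ x i := fun i => hIpos (hxI i)
  have hxσ : inRσ (Tuple.sort x) x := inRσ_sort x
  have huI : ∀ i, (if x i ≤ c then 0 else x i) ∈ I := by
    intro i; split
    · exact h0
    · exact hxI i
  have hvI : ∀ i, min (x i) c ∈ I := by
    intro i
    rcases le_total (x i) c with h | h
    · rw [min_eq_left h]; exact hxI i
    · rw [min_eq_right h]; exact hcI
  have hu : inRσ (Tuple.sort x) (fun i => if x i ≤ c then 0 else x i) :=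
    inRσ_cut hxσ hx0 hc0
  have hv : inRσ (Tuple.sort x) (fun i => min (x i) c) := inRσ_min_const hxσ c
  have hmod := hCM (Tuple.sort x) _ _ huI hvI hu hv
  have hmin : (fun i => min ((if x i ≤ c then 0 else x i)) (min (x i) c))
      = fun i => min (if x i ≤ c then 0 else x i) c := by
    funext i
    by_cases h : x i ≤ c
    · rw [if_pos h, min_eq_left h, min_eq_left (hx0 i), min_eq_left hc0]
    · rw [if_neg h, min_eq_right (min_le_left _ _)]
  have hmax : (fun i => max (if x i ≤ c then 0 else x i) (min (x i) c)) = x := by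
    funext i
    by_cases h : x i ≤ c
    · rw [if_pos h, min_eq_left h, max_eq_right (hx0 i)]
    · rw [if_neg h, min_eq_right (le_of_lt (not_le.1 h)),
        max_eq_left (le_of_lt (not_le.1 h))]
  rw [hmin, hmax] at hmod
  linarith

lemma Inv_to_P3 (h0 : (0:ℝ) ∈ I) (h1 : (1:ℝ) ∈ I) (hIpos : I ⊆ Set.Ici (0:ℝ))
    (hnc : ∃ x y : Fin n → ℝ, (∀ i, x i ∈ I) ∧ (∀ i, y i ∈ I) ∧ f x ≠ f y)
    (hInv : InvHMin I f) (hwh : WeaklyHomPos I (fun y => f y - f (fun _ => 0))) :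
    ∃ φf : ℝ → ℝ, MonotoneOn φf I ∧ φf 0 = 0 ∧ φf 1 = 1 ∧
      ∀ x : Fin n → ℝ, (∀ i, x i ∈ I) →
        f x = Lov (fun A => f (ind A)) (fun i => φf (x i)) := by
  obtain ⟨χ, hmono, hχ0, hhom⟩ := hwh
  have hhom' : ∀ t ∈ I, ∀ A : Finset (Fin n),
      f (fun i => t * ind A i) - f (fun _ => 0) = χ t * (f (ind A) - f (fun _ => 0)) :=
    fun t ht A => hhom t ht A
  have hform := master h0 hIpos hInv hmono hχ0 hhom'
  obtain ⟨x₀, y₀, hx₀, hy₀, hne⟩ := hnc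
  have hex : ∃ A : Finset (Fin n), f (ind A) ≠ f (ind (∅ : Finset (Fin n))) := by
    by_contra h
    push_neg at h
    have e1 := hform x₀ hx₀
    have e2 := hform y₀ hy₀
    rw [Lov_const h] at e1 e2
    exact hne (e1.trans e2.symm)
  obtain ⟨A0, hA0⟩ := hex
  have hne0 : f (ind A0) - f (fun _ : Fin n => (0:ℝ)) ≠ 0 := by
    rw [← ind_empty]
    exact sub_ne_zero_of_ne hA0
  have hχ1 : χ 1 = 1 := by
    have h' := hhom' 1 h1 A0
    rw [show (fun i => (1:ℝ) * ind A0 i) = ind A0 from funext fun i => one_mul _] at h'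
    have hz : (χ 1 - 1) * (f (ind A0) - f (fun _ : Fin n => (0:ℝ))) = 0 := by
      linarith
    rcases mul_eq_zero.1 hz with h'' | h''
    · linarith
    · exact absurd h'' hne0
  exact ⟨χ, hmono, hχ0, hχ1, hform⟩

end implications

/-- For `[0,1] ⊆ I ⊆ ℝ₊` and a nonconstant `f : Iⁿ → ℝ`, TFAE:
(i) `f` is a quasi-Lovász extension and `f_0(1_A) ≠ 0` for some `A`;
(ii) `f` is comonotonically modular (equivalently, invariant under horizontal
min-differences) and `f_0` is weakly homogeneous;
(iii) there is a nondecreasing `φ_f : I → ℝ` with `φ_f(0) = 0`, `φ_f(1) = 1` and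
`f = L_{f|_{{0,1}ⁿ}} ∘ φ_f`. -/
theorem stmt14 {n : ℕ} (I : Set ℝ) (hI : I.OrdConnected)
    (hI1 : Set.Icc (0 : ℝ) 1 ⊆ I) (hIpos : I ⊆ Set.Ici (0 : ℝ))
    (f : (Fin n → ℝ) → ℝ)
    (hnc : ∃ x y : Fin n → ℝ, (∀ i, x i ∈ I) ∧ (∀ i, y i ∈ I) ∧ f x ≠ f y) :
    ((IsQLE I f ∧ ∃ A : Finset (Fin n), f (ind A) - f (fun _ => 0) ≠ 0) ↔
       (ComonModular I f ∧ WeaklyHomPos I (fun y => f y - f (fun _ => 0)))) ∧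
    ((ComonModular I f ∧ WeaklyHomPos I (fun y => f y - f (fun _ => 0))) ↔
       (InvHMin I f ∧ WeaklyHomPos I (fun y => f y - f (fun _ => 0)))) ∧
    ((ComonModular I f ∧ WeaklyHomPos I (fun y => f y - f (fun _ => 0))) ↔
       ∃ φf : ℝ → ℝ, MonotoneOn φf I ∧ φf 0 = 0 ∧ φf 1 = 1 ∧
         ∀ x : Fin n → ℝ, (∀ i, x i ∈ I) →
           f x = Lov (fun A => f (ind A)) (fun i => φf (x i))) := by
  have h0 : (0:ℝ) ∈ I := hI1 ⟨le_rfl, zero_le_one⟩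
  have h1 : (1:ℝ) ∈ I := hI1 ⟨zero_le_one, le_rfl⟩
  have h32 : (∃ φf : ℝ → ℝ, MonotoneOn φf I ∧ φf 0 = 0 ∧ φf 1 = 1 ∧
        ∀ x : Fin n → ℝ, (∀ i, x i ∈ I) →
          f x = Lov (fun A => f (ind A)) (fun i => φf (x i))) →
      ComonModular I f ∧ WeaklyHomPos I (fun y => f y - f (fun _ => 0)) := by
    rintro ⟨φf, hm, hp0, hp1, hF⟩
    exact P3_to_P2 h0 h1 hIpos hm hp0 hF
  have h31 : (∃ φf : ℝ → ℝ, MonotoneOn φf I ∧ φf 0 = 0 ∧ φf 1 = 1 ∧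
        ∀ x : Fin n → ℝ, (∀ i, x i ∈ I) →
          f x = Lov (fun A => f (ind A)) (fun i => φf (x i))) →
      IsQLE I f ∧ ∃ A : Finset (Fin n), f (ind A) - f (fun _ => 0) ≠ 0 := by
    rintro ⟨φf, hm, hp0, hp1, hF⟩
    exact P3_to_P1 hnc hm hp0 hF
  have h13 : (IsQLE I f ∧ ∃ A : Finset (Fin n), f (ind A) - f (fun _ => 0) ≠ 0) →
      ∃ φf : ℝ → ℝ, MonotoneOn φf I ∧ φf 0 = 0 ∧ φf 1 = 1 ∧
        ∀ x : Fin n → ℝ, (∀ i, x i ∈ I) →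
          f x = Lov (fun A => f (ind A)) (fun i => φf (x i)) :=
    fun ⟨hq, hA⟩ => P1_to_P3 h0 h1 hq hA
  have h22' : (ComonModular I f ∧ WeaklyHomPos I (fun y => f y - f (fun _ => 0))) →
      InvHMin I f ∧ WeaklyHomPos I (fun y => f y - f (fun _ => 0)) :=
    fun ⟨hcm, hw⟩ => ⟨CM_to_Inv h0 hIpos hcm, hw⟩
  have h2'3 : (InvHMin I f ∧ WeaklyHomPos I (fun y => f y - f (fun _ => 0))) →
      ∃ φf : ℝ → ℝ, MonotoneOn φf I ∧ φf 0 = 0 ∧ φf 1 = 1 ∧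
        ∀ x : Fin n → ℝ, (∀ i, x i ∈ I) →
          f x = Lov (fun A => f (ind A)) (fun i => φf (x i)) :=
    fun ⟨hi, hw⟩ => Inv_to_P3 h0 h1 hIpos hnc hi hw
  exact ⟨⟨fun h => h32 (h13 h), fun h => h31 (h2'3 (h22' h))⟩,
    ⟨h22', fun h => h32 (h2'3 h)⟩,
    ⟨fun h => h2'3 (h22' h), h32⟩⟩
end
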